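/- Let V be a finite-dimensional Γ-graded vector space of dimension at least 2 with a non-degenerate ε-symmetric bilinear form ( , ). For u,v ∈ V define f(u,v) ∈ End(V) by f(u,v)(w) := ε(v,w)(u,w)v − (v,w)u. Then f(u,v) lies in so_ε(V,( , )) and Tr_ε(f ∘ f(u,v)) = −2(f(u),v) for every f ∈ so_ε(V,( , )). -/

import Mathlib

/-- A commutation factor of an abelian group `Γ` with values in `k`. -/
structure CommutationFactor (k Γ : Type*) [Field k] [AddCommGroup Γ] where
  ε : Γ → Γ → k
  mul_symm : ∀ a b, ε a b * ε b a = 1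
  add_fst : ∀ a b c, ε (a + b) c = ε a c * ε b c
  add_snd : ∀ a b c, ε a (b + c) = ε a b * ε a c

/-- The submodule of endomorphisms of a `Γ`-graded vector space which are
homogeneous of degree `γ`. -/
def homDeg {k Γ V : Type*} [Field k] [AddCommGroup Γ]
    [AddCommGroup V] [Module k V]
    (𝒱 : Γ → Submodule k V) (γ : Γ) : Submodule k (Module.End k V) where
  carrier := {f | ∀ a : Γ, ∀ v ∈ 𝒱 a, f v ∈ 𝒱 (a + γ)}
  add_mem' := by
    intro f g hf hg a v hv
    simpa [LinearMap.add_apply] using Submodule.add_mem _ (hf a v hv) (hg a v hv)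
  zero_mem' := by
    intro a v hv
    simp
  smul_mem' := by
    intro c f hf a v hv
    simpa [LinearMap.smul_apply] using Submodule.smul_mem _ c (hf a v hv)

/-- The submodule of endomorphisms of degree `γ` which are ε-skew with respect
to a bilinear form `Bv`. -/
def skewDeg {k Γ V : Type*} [Field k] [AddCommGroup Γ]
    [AddCommGroup V] [Module k V]
    (ε : Γ → Γ → k) (Bv : V →ₗ[k] V →ₗ[k] k)
    (𝒱 : Γ → Submodule k V) (γ : Γ) : Submodule k (Module.End k V) where
  carrier := {f | ∀ a b : Γ, ∀ v ∈ 𝒱 a, ∀ w ∈ 𝒱 b,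
    Bv (f v) w + ε γ a * Bv v (f w) = 0}
  add_mem' := by
    intro f g hf hg a b v hv w hw
    have h1 := hf a b v hv w hw
    have h2 := hg a b v hv w hw
    simp only [LinearMap.add_apply, map_add]
    linear_combination h1 + h2
  zero_mem' := by
    intro a b v hv w hw
    simp
  smul_mem' := by
    intro c f hf a b v hv w hw
    have h1 := hf a b v hv w hw
    simp only [LinearMap.smul_apply, map_smul, smul_eq_mul]
    linear_combination c * h1

/-- The colour Lie algebra `so_ε(V, Bv)` as a submodule of `End(V)`: the span
of its homogeneous components. -/
def soSub {k Γ V : Type*} [Field k] [AddCommGroup Γ]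
    [AddCommGroup V] [Module k V]
    (ε : Γ → Γ → k) (Bv : V →ₗ[k] V →ₗ[k] k)
    (𝒱 : Γ → Submodule k V) : Submodule k (Module.End k V) :=
  ⨆ γ : Γ, (homDeg 𝒱 γ ⊓ skewDeg ε Bv 𝒱 γ)

namespace CommutationFactor
variable {k Γ : Type*} [Field k] [AddCommGroup Γ] (E : CommutationFactor k Γ)

lemma ne_zero (a b : Γ) : E.ε a b ≠ 0 :=
  left_ne_zero_of_mul_eq_one (E.mul_symm a b)

lemma zero_snd (a : Γ) : E.ε a 0 = 1 := by
  have h := E.add_snd a 0 0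
  rw [add_zero] at h
  have := E.ne_zero a 0
  field_simp at h
  exact h.symm

lemma zero_fst (a : Γ) : E.ε 0 a = 1 := by
  have h := E.add_fst 0 0 a
  rw [add_zero] at h
  have := E.ne_zero 0 a
  field_simp at h
  exact h.symm

lemma symm_inv (a b : Γ) : E.ε b a = (E.ε a b)⁻¹ :=
  eq_inv_of_mul_eq_one_left (E.mul_symm b a)

lemma neg_fst (a b : Γ) : E.ε (-a) b = (E.ε a b)⁻¹ := by
  apply eq_inv_of_mul_eq_one_left
  rw [← E.add_fst, neg_add_cancel, E.zero_fst]

lemma neg_snd (a b : Γ) : E.ε a (-b) = (E.ε a b)⁻¹ := by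
  apply eq_inv_of_mul_eq_one_left
  rw [← E.add_snd, neg_add_cancel, E.zero_snd]

lemma sq (a : Γ) : E.ε a a * E.ε a a = 1 := E.mul_symm a a

end CommutationFactor

lemma trace_rankOne {k V : Type*} [Field k] [AddCommGroup V] [Module k V]
    [FiniteDimensional k V] (φ : V →ₗ[k] k) (y : V) :
    LinearMap.trace k V (φ.smulRight y) = φ y := by
  have h : φ.smulRight y = dualTensorHom k V V (φ ⊗ₜ[k] y) := by
    ext x; simp
  rw [h, LinearMap.trace_eq_contract_apply, contractLeft_apply]

/-- For `u ∈ V_a`, `v ∈ V_b`, the endomorphism `F = f(u,v)` given on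
homogeneous `w` by `F(w) = ε(v,w)(u,w)v − (v,w)u` lies in
`so_ε(V)` (it is homogeneous of degree `a+b` and ε-skew), and
`Tr_ε(f ∘ F) = −2(f(u),v)` for every `f ∈ so_ε(V)`. -/
theorem stmt8 {k Γ V : Type*} [Field k] [AddCommGroup Γ] [DecidableEq Γ]
    [AddCommGroup V] [Module k V] [FiniteDimensional k V]
    (h2 : (2 : k) ≠ 0) (hdim : 2 ≤ Module.finrank k V)
    (E : CommutationFactor k Γ)
    (𝒱 : Γ → Submodule k V) [DirectSum.Decomposition 𝒱]
    (Bv : V →ₗ[k] V →ₗ[k] k)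
    (hBvdeg : ∀ a b : Γ, a + b ≠ 0 → ∀ v ∈ 𝒱 a, ∀ w ∈ 𝒱 b, Bv v w = 0)
    (hBvsymm : ∀ a b : Γ, ∀ v ∈ 𝒱 a, ∀ w ∈ 𝒱 b, Bv v w = E.ε a b * Bv w v)
    (hBvnd : ∀ v : V, (∀ w, Bv v w = 0) → v = 0)
    (calE : Module.End k V)
    (hcalE : ∀ γ : Γ, ∀ v ∈ 𝒱 γ, calE v = E.ε γ γ • v)
    (a b : Γ) (u : V) (hu : u ∈ 𝒱 a) (v : V) (hv : v ∈ 𝒱 b)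
    (F : Module.End k V)
    (hF : ∀ c : Γ, ∀ w ∈ 𝒱 c, F w = (E.ε b c * Bv u w) • v - Bv v w • u) :
    F ∈ homDeg 𝒱 (a + b) ⊓ skewDeg E.ε Bv 𝒱 (a + b) ∧
    (∀ f ∈ soSub E.ε Bv 𝒱,
      LinearMap.trace k V (calE * (f * F)) = -2 * Bv (f u) v) := by
  classical
  -- contrapositive of the degree condition
  have hnd : ∀ (c d : Γ) (x y : V), x ∈ 𝒱 c → y ∈ 𝒱 d → Bv x y ≠ 0 → c + d = 0 := by
    intro c d x y hx hy h
    by_contra hcd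
    exact h (hBvdeg c d hcd x hx y hy)
  have htop : (⨆ γ : Γ, 𝒱 γ) = ⊤ :=
    (DirectSum.Decomposition.isInternal 𝒱).submodule_iSup_eq_top
  -- global formula for F
  have hF' : ∀ x : V, F x = (E.ε a b * Bv u x) • v - Bv v x • u := by
    intro x
    have hx : x ∈ ⨆ γ : Γ, 𝒱 γ := htop ▸ Submodule.mem_top
    refine Submodule.iSup_induction (x := x)
      (motive := fun x => F x = (E.ε a b * Bv u x) • v - Bv v x • u) _ hx ?_ ?_ ?_
    · intro c w hw
      rw [hF c w hw]
      by_cases h0 : Bv u w = 0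
      · rw [h0, mul_zero, mul_zero]
      · have hac : a + c = 0 := hnd a c u w hu hw h0
        have hc : c = -a := by
          have := eq_neg_of_add_eq_zero_right hac
          exact this
        subst hc
        rw [E.neg_snd, ← E.symm_inv]
    · simp
    · intro x y hx hy
      simp only [map_add, mul_add, add_smul]
      rw [hx, hy]
      abel
  constructor
  · constructor
    · -- homDeg
      intro c w hw
      rw [hF c w hw]
      apply Submodule.sub_mem
      · by_cases h0 : Bv u w = 0
        · rw [h0, mul_zero, zero_smul]; exact Submodule.zero_mem _
        · have hac : a + c = 0 := hnd a c u w hu hw h0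
          have hc : c + (a + b) = b := by
            have : c = -a := eq_neg_of_add_eq_zero_right hac
            rw [this]; abel
          rw [hc]
          exact Submodule.smul_mem _ _ hv
      · by_cases h0 : Bv v w = 0
        · rw [h0, zero_smul]; exact Submodule.zero_mem _
        · have hbc : b + c = 0 := hnd b c v w hv hw h0
          have hc : c + (a + b) = a := by
            have : c = -b := eq_neg_of_add_eq_zero_right hbc
            rw [this]; abel
          rw [hc]
          exact Submodule.smul_mem _ _ hu
    · -- skewDeg
      intro c d w hw w' hw'
      rw [hF c w hw, hF d w' hw']
      have hwv : Bv w v = E.ε c b * Bv v w := hBvsymm c b w hw v hv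
      have hwu : Bv w u = E.ε c a * Bv u w := hBvsymm c a w hw u hu
      simp only [map_sub, map_smul, LinearMap.sub_apply, LinearMap.smul_apply, smul_eq_mul,
        E.add_fst]
      rw [hwv, hwu]
      have key1 : E.ε a c * E.ε c a = 1 := E.mul_symm a c
      have key2 : Bv v w * Bv u w' * (E.ε a c * E.ε b c * (E.ε b d * E.ε c b) - 1) = 0 := by
        by_cases h1 : Bv v w = 0
        · rw [h1, zero_mul, zero_mul]
        by_cases h3 : Bv u w' = 0
        · rw [h3, mul_zero, zero_mul]
        have hbc : b + c = 0 := hnd b c v w hv hw h1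
        have had : a + d = 0 := hnd a d u w' hu hw' h3
        have hc : c = -b := eq_neg_of_add_eq_zero_right hbc
        have hd : d = -a := eq_neg_of_add_eq_zero_right had
        subst hc; subst hd
        have e3 : (E.ε b b)⁻¹ = E.ε b b := inv_eq_of_mul_eq_one_right (E.sq b)
        have e4 : (E.ε b a)⁻¹ = E.ε a b := inv_eq_of_mul_eq_one_right (E.mul_symm b a)
        have e1 : (E.ε a b)⁻¹ = E.ε b a := inv_eq_of_mul_eq_one_right (E.mul_symm a b)
        simp only [E.neg_snd, E.neg_fst, e1, e3, e4]
        linear_combination (Bv v w * Bv u w' * (E.ε b b * E.ε b b)) * E.mul_symm b a +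
          Bv v w * Bv u w' * E.sq b
      linear_combination (-(Bv u w * Bv v w') * E.ε b c) * key1 + key2
  · -- trace formula
    intro f hf
    have hf' : f ∈ ⨆ γ : Γ, (homDeg 𝒱 γ ⊓ skewDeg E.ε Bv 𝒱 γ) := hf
    clear hf
    refine Submodule.iSup_induction (x := f)
      (motive := fun f => LinearMap.trace k V (calE * (f * F)) = -2 * Bv (f u) v) _ hf' ?_ ?_ ?_
    · intro γ f hfm
      obtain ⟨hfhom, hfskew⟩ := hfm
      have hfv : f v ∈ 𝒱 (b + γ) := hfhom b v hv
      have hfu : f u ∈ 𝒱 (a + γ) := hfhom a u hu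
      have hcomp : calE * (f * F) =
          (E.ε a b * E.ε (b + γ) (b + γ)) • (Bv u).smulRight (f v)
            - (E.ε (a + γ) (a + γ)) • (Bv v).smulRight (f u) := by
        ext x
        simp only [Module.End.mul_apply, hF' x, map_sub, map_smul, LinearMap.sub_apply,
          LinearMap.smul_apply, LinearMap.smulRight_apply]
        rw [hcalE _ _ hfv, hcalE _ _ hfu]
        module
      rw [hcomp, map_sub, map_smul, map_smul, trace_rankOne, trace_rankOne, smul_eq_mul,
        smul_eq_mul]
      have hskew := hfskew a b u hu v hv
      have hsymm2 : Bv v (f u) = E.ε b (a + γ) * Bv (f u) v :=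
        hBvsymm b (a + γ) v hv (f u) hfu
      by_cases hγ0 : a + b + γ = 0
      · have hγ : γ = -(a + b) := eq_neg_of_add_eq_zero_right hγ0
        subst hγ
        rw [show b + -(a + b) = -a from by abel]
        rw [show a + -(a + b) = -b from by abel] at hsymm2 ⊢
        rw [show (-(a + b) : Γ) = -a + -b from by abel, E.add_fst] at hskew
        have e1 : (E.ε a b)⁻¹ = E.ε b a := inv_eq_of_mul_eq_one_right (E.mul_symm a b)
        have e2 : (E.ε a a)⁻¹ = E.ε a a := inv_eq_of_mul_eq_one_right (E.sq a)
        have e3 : (E.ε b b)⁻¹ = E.ε b b := inv_eq_of_mul_eq_one_right (E.sq b)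
        have e4 : (E.ε b a)⁻¹ = E.ε a b := inv_eq_of_mul_eq_one_right (E.mul_symm b a)
        simp only [E.neg_fst, E.neg_snd, e1, e2, e3, e4, inv_inv] at hskew hsymm2 ⊢
        rw [hsymm2]
        linear_combination hskew - Bv (f u) v * E.sq b
      · have h1 : Bv (f u) v = 0 := by
          apply hBvdeg (a + γ) b _ (f u) hfu v hv
          intro h
          exact hγ0 (by rw [← h]; abel)
        have h2 : Bv u (f v) = 0 := by
          apply hBvdeg a (b + γ) _ u hu (f v) hfv
          intro h
          exact hγ0 (by rw [← h]; abel)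
        rw [hsymm2, h1, h2]
        ring
    · simp
    · intro x y hx hy
      simp only [add_mul, mul_add, map_add, LinearMap.add_apply]
      rw [hx, hy]
      try ring
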